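/- Let σ(z) = max{0, z} be the ReLU function, let d ≥ 1, B > 0, μ > 0, and let P be a probability distribution of (x, y) ∈ ℝ^d × ℝ with ‖x‖₂ ≤ √d almost surely and |y| ≤ B almost surely. Define L_P(w) = E[(σ(⟨w, x⟩) − y)²] and χ_P^{σ_w} = E[σ(⟨w, x⟩)·x], χ_P = E[y·x]. Fix w, w* ∈ ℝ^d and suppose: (i) ‖χ_P^{σ_{w*}} − χ_P‖₂² ≤ L_P(w*), and (ii) E[(σ(⟨w, x⟩) − σ(⟨w*, x⟩))²] ≤ μ·‖χ_P^{σ_w} − χ_P^{σ_{w*}}‖₂². Then L_P(w) ≤ 2(1 + 2μ)·L_P(w*) + 4μ·‖χ_P^{σ_w} − χ_P‖₂², where χ_P^{σ_w} − χ_P = E[(σ(⟨w, x⟩) − y)·x] is the gradient of the surrogate population risk at w. -/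
import Mathlib

open MeasureTheory
open scoped RealInnerProductSpace

section Aux

variable {d : ℕ} {P : Measure (EuclideanSpace ℝ (Fin d) × ℝ)} [IsProbabilityMeasure P]

lemma relu_cont (v : EuclideanSpace ℝ (Fin d)) :
    Continuous (fun p : EuclideanSpace ℝ (Fin d) × ℝ => max 0 ⟪v, p.1⟫) :=
  continuous_const.max (Continuous.inner continuous_const continuous_fst)

lemma relu_bound (v : EuclideanSpace ℝ (Fin d)) (p : EuclideanSpace ℝ (Fin d) × ℝ) :
    |max 0 ⟪v, p.1⟫| ≤ ‖v‖ * ‖p.1‖ := by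
  have h := abs_real_inner_le_norm v p.1
  rcases le_or_gt ⟪v, p.1⟫ 0 with h0 | h0
  · rw [max_eq_left h0]
    simpa using mul_nonneg (norm_nonneg v) (norm_nonneg p.1)
  · rw [max_eq_right h0.le]; exact h

end Aux

theorem relu_misspecified_risk_bound {d : ℕ} (hd : 1 ≤ d) (B μ : ℝ)
    (hB : 0 < B) (hμ : 0 < μ)
    (P : Measure (EuclideanSpace ℝ (Fin d) × ℝ)) [IsProbabilityMeasure P]
    (hx : ∀ᵐ p ∂P, ‖p.1‖ ≤ Real.sqrt d)
    (hy : ∀ᵐ p ∂P, |p.2| ≤ B)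
    (w wstar : EuclideanSpace ℝ (Fin d))
    (hi : ‖(∫ p, max 0 ⟪wstar, p.1⟫ • p.1 ∂P) - ∫ p, p.2 • p.1 ∂P‖ ^ 2 ≤
      ∫ p, (max 0 ⟪wstar, p.1⟫ - p.2) ^ 2 ∂P)
    (hii : (∫ p, (max 0 ⟪w, p.1⟫ - max 0 ⟪wstar, p.1⟫) ^ 2 ∂P) ≤
      μ * ‖(∫ p, max 0 ⟪w, p.1⟫ • p.1 ∂P) - ∫ p, max 0 ⟪wstar, p.1⟫ • p.1 ∂P‖ ^ 2) :
    (∫ p, (max 0 ⟪w, p.1⟫ - p.2) ^ 2 ∂P) ≤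
        2 * (1 + 2 * μ) * (∫ p, (max 0 ⟪wstar, p.1⟫ - p.2) ^ 2 ∂P) +
          4 * μ * ‖(∫ p, max 0 ⟪w, p.1⟫ • p.1 ∂P) - ∫ p, p.2 • p.1 ∂P‖ ^ 2 ∧
      (∫ p, max 0 ⟪w, p.1⟫ • p.1 ∂P) - (∫ p, p.2 • p.1 ∂P) =
        ∫ p, (max 0 ⟪w, p.1⟫ - p.2) • p.1 ∂P := by
  set s : ℝ := Real.sqrt d with hs
  have hs0 : 0 ≤ s := Real.sqrt_nonneg _
  -- a.e. bounds
  have hboundf : ∀ᵐ p ∂P, |max 0 ⟪w, p.1⟫| ≤ ‖w‖ * s := by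
    filter_upwards [hx] with p hp
    exact (relu_bound w p).trans (by
      exact mul_le_mul_of_nonneg_left hp (norm_nonneg w))
  have hboundg : ∀ᵐ p ∂P, |max 0 ⟪wstar, p.1⟫| ≤ ‖wstar‖ * s := by
    filter_upwards [hx] with p hp
    exact (relu_bound wstar p).trans
      (mul_le_mul_of_nonneg_left hp (norm_nonneg wstar))
  -- integrability of squared differences
  have intsq : ∀ (f g : EuclideanSpace ℝ (Fin d) × ℝ → ℝ) (Cf Cg : ℝ),
      Continuous f → Continuous g → (∀ᵐ p ∂P, |f p| ≤ Cf) → (∀ᵐ p ∂P, |g p| ≤ Cg) →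
      Integrable (fun p => (f p - g p) ^ 2) P := by
    intro f g Cf Cg cf cg bf bg
    refine Integrable.mono' (integrable_const ((Cf + Cg) ^ 2))
      ((cf.sub cg).pow 2).aestronglyMeasurable ?_
    filter_upwards [bf, bg] with p hf hg
    have h1 : |f p - g p| ≤ Cf + Cg := (abs_sub _ _).trans (add_le_add hf hg)
    have h2 : (0:ℝ) ≤ Cf + Cg := le_trans (abs_nonneg _) h1
    have hn : ‖(f p - g p) ^ 2‖ = |f p - g p| ^ 2 := by
      rw [Real.norm_eq_abs, abs_pow]
    rw [hn]
    exact pow_le_pow_left₀ (abs_nonneg _) h1 2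
  have cf : Continuous (fun p : EuclideanSpace ℝ (Fin d) × ℝ => max 0 ⟪w, p.1⟫) := relu_cont w
  have cg : Continuous (fun p : EuclideanSpace ℝ (Fin d) × ℝ => max 0 ⟪wstar, p.1⟫) := relu_cont wstar
  have cy : Continuous (fun p : EuclideanSpace ℝ (Fin d) × ℝ => p.2) := continuous_snd
  have hy' : ∀ᵐ p ∂P, |(fun p : EuclideanSpace ℝ (Fin d) × ℝ => p.2) p| ≤ B := hy
  have Ifg := intsq _ _ _ _ cf cg hboundf hboundg
  have Ify := intsq _ _ _ _ cf cy hboundf hy'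
  have Igy := intsq _ _ _ _ cg cy hboundg hy'
  -- vector integrability
  have intvec : ∀ (f : EuclideanSpace ℝ (Fin d) × ℝ → ℝ) (Cf : ℝ),
      Continuous f → (∀ᵐ p ∂P, |f p| ≤ Cf) →
      Integrable (fun p => f p • p.1) P := by
    intro f Cf cf bf
    have hCf : 0 ≤ Cf := by
      obtain ⟨p, hp⟩ := bf.exists
      exact le_trans (abs_nonneg _) hp
    refine Integrable.mono' (integrable_const (Cf * s))
      (cf.smul continuous_fst).aestronglyMeasurable ?_
    filter_upwards [bf, hx] with p hf hxp
    calc ‖f p • p.1‖ = |f p| * ‖p.1‖ := by rw [norm_smul, Real.norm_eq_abs]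
      _ ≤ Cf * s := mul_le_mul hf hxp (norm_nonneg _) hCf
  have Vf := intvec _ _ cf hboundf
  have Vg := intvec _ _ cg hboundg
  have Vy := intvec _ _ cy hy'
  -- part 2
  have part2 : (∫ p, max 0 ⟪w, p.1⟫ • p.1 ∂P) - (∫ p, p.2 • p.1 ∂P) =
      ∫ p, (max 0 ⟪w, p.1⟫ - p.2) • p.1 ∂P := by
    rw [← integral_sub Vf Vy]
    congr 1; funext p; rw [sub_smul]
  refine ⟨?_, part2⟩
  -- L(w) ≤ 2 E[(f-g)^2] + 2 E[(g-y)^2]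
  have h1 : (∫ p, (max 0 ⟪w, p.1⟫ - p.2) ^ 2 ∂P) ≤
      (∫ p, (2 * (max 0 ⟪w, p.1⟫ - max 0 ⟪wstar, p.1⟫) ^ 2 +
        2 * (max 0 ⟪wstar, p.1⟫ - p.2) ^ 2) ∂P) := by
    refine integral_mono Ify ((Ifg.const_mul 2).add (Igy.const_mul 2)) ?_
    intro p
    dsimp only
    nlinarith [sq_nonneg ((max 0 ⟪w, p.1⟫ - max 0 ⟪wstar, p.1⟫) - (max 0 ⟪wstar, p.1⟫ - p.2))]
  rw [integral_add (Ifg.const_mul 2) (Igy.const_mul 2), integral_const_mul, integral_const_mul] at h1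
  -- triangle on norms
  set A := ∫ p, max 0 ⟪w, p.1⟫ • p.1 ∂P
  set Bv := ∫ p, max 0 ⟪wstar, p.1⟫ • p.1 ∂P
  set C := ∫ p, p.2 • p.1 ∂P
  have h2 : ‖A - Bv‖ ^ 2 ≤ 2 * ‖A - C‖ ^ 2 + 2 * ‖Bv - C‖ ^ 2 := by
    have ht : ‖A - Bv‖ ≤ ‖A - C‖ + ‖Bv - C‖ := by
      calc ‖A - Bv‖ = ‖(A - C) - (Bv - C)‖ := by rw [sub_sub_sub_cancel_right]
        _ ≤ ‖A - C‖ + ‖Bv - C‖ := norm_sub_le _ _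
    nlinarith [norm_nonneg (A - Bv), norm_nonneg (A - C), norm_nonneg (Bv - C),
      sq_nonneg (‖A - C‖ - ‖Bv - C‖)]
  have h3 : (∫ p, (max 0 ⟪w, p.1⟫ - max 0 ⟪wstar, p.1⟫) ^ 2 ∂P) ≤
      2 * μ * ‖A - C‖ ^ 2 + 2 * μ * (∫ p, (max 0 ⟪wstar, p.1⟫ - p.2) ^ 2 ∂P) := by
    calc (∫ p, (max 0 ⟪w, p.1⟫ - max 0 ⟪wstar, p.1⟫) ^ 2 ∂P) ≤ μ * ‖A - Bv‖ ^ 2 := hii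
      _ ≤ μ * (2 * ‖A - C‖ ^ 2 + 2 * ‖Bv - C‖ ^ 2) :=
          mul_le_mul_of_nonneg_left h2 hμ.le
      _ ≤ 2 * μ * ‖A - C‖ ^ 2 + 2 * μ * (∫ p, (max 0 ⟪wstar, p.1⟫ - p.2) ^ 2 ∂P) := by
          nlinarith [hi]
  linarith
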